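/- arXiv:2604.01190 — 3 statements merged into one kernel-verified Lean document; each statement's English description precedes it below -/
import Mathlib

section
/- Let λ : (0,∞) → (0,1/4) be the inverse of θ(λ) = -1 + Artanh(√(1-4λ))/√(1-4λ), and define f(θ) = -log(λ(θ)) - 2θ - θ·log(1-4λ(θ)). Then f satisfies 1 = 4λ(θ) + exp(-f'(θ)) for all θ > 0. -/
open Real Filter Set

noncomputable def artanh (x : ℝ) : ℝ := (1/2) * Real.log ((1+x)/(1-x))

noncomputable def thetaF (l : ℝ) : ℝ := -1 + _root_.artanh (Real.sqrt (1-4*l)) / Real.sqrt (1-4*l)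

lemma artanh_hasDerivAt {s : ℝ} (h : s ∈ Set.Ioo (-1:ℝ) 1) :
    HasDerivAt _root_.artanh (1/(1-s^2)) s := by
  obtain ⟨h1, h2⟩ := h
  have hev : ∀ᶠ x in nhds s, _root_.artanh x = (1/2) * (Real.log (1+x) - Real.log (1-x)) := by
    have hmem : Set.Ioo (-1:ℝ) 1 ∈ nhds s := (isOpen_Ioo).mem_nhds ⟨h1, h2⟩
    filter_upwards [hmem] with x hx
    rw [_root_.artanh, Real.log_div (by linarith [hx.1]) (by linarith [hx.2])]
  have hd : HasDerivAt (fun x => (1/2) * (Real.log (1+x) - Real.log (1-x)))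
      ((1/2) * (1/(1+s) - (-1)/(1-s))) s := by
    have d1 : HasDerivAt (fun x : ℝ => 1 + x) 1 s := (hasDerivAt_id s).const_add 1
    have d2 : HasDerivAt (fun x : ℝ => 1 - x) (-1) s := by
      simpa using (hasDerivAt_id s).const_sub 1
    exact ((d1.log (by linarith)).sub (d2.log (by linarith))).const_mul (1/2)
  have := hd.congr_of_eventuallyEq hev
  have e1 : (1+s) ≠ 0 := by linarith
  have e2 : (1-s) ≠ 0 := by linarith
  have e3 : (1-s^2) ≠ 0 := by
    intro h; apply e1; nlinarith [sq_nonneg s]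
  refine this.congr_deriv ?_
  field_simp
  ring

lemma artanh_zero : _root_.artanh 0 = 0 := by simp [_root_.artanh]

lemma sub_lemma {h : ℝ → ℝ} {d : ℝ → ℝ}
    (hd : ∀ x ∈ Set.Ico (0:ℝ) 1, HasDerivAt h (d x) x)
    (hpos : ∀ x ∈ Set.Ioo (0:ℝ) 1, 0 < d x)
    {s : ℝ} (hs : s ∈ Set.Ioo (0:ℝ) 1) : h 0 < h s := by
  have hmono : StrictMonoOn h (Set.Ico (0:ℝ) 1) := by
    apply strictMonoOn_of_deriv_pos (convex_Ico 0 1)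
    · exact fun x hx => ((hd x hx).continuousAt).continuousWithinAt
    · intro x hx
      rw [interior_Ico] at hx
      rw [(hd x ⟨le_of_lt hx.1, hx.2⟩).deriv]
      exact hpos x hx
  exact hmono ⟨le_refl 0, one_pos⟩ ⟨le_of_lt hs.1, hs.2⟩ hs.1

lemma artanh_gt {s : ℝ} (hs : s ∈ Set.Ioo (0:ℝ) 1) : s < _root_.artanh s := by
  have := sub_lemma (h := fun s => _root_.artanh s - s) (d := fun s => 1/(1-s^2) - 1)
    (fun x hx => ((artanh_hasDerivAt ⟨by linarith [hx.1], hx.2⟩).sub (hasDerivAt_id x)))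
    (fun x hx => by
      have h1 : (0:ℝ) < 1 - x^2 := by nlinarith [hx.1, hx.2]
      have h2 : 1 - x^2 < 1 := by nlinarith [hx.1]
      have : (1:ℝ) < 1/(1-x^2) := by
        rw [lt_div_iff₀ h1]; linarith
      linarith) hs
  simp only [_root_.artanh_zero] at this
  linarith

lemma key_gt {s : ℝ} (hs : s ∈ Set.Ioo (0:ℝ) 1) : _root_.artanh s < s/(1-s^2) := by
  have := sub_lemma (h := fun s => s/(1-s^2) - _root_.artanh s)
    (d := fun s => 2*s^2/(1-s^2)^2)
    (fun x hx => by
      have h1 : (0:ℝ) < 1 - x^2 := by nlinarith [hx.1, hx.2]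
      have h1' : (1 - x^2) ≠ 0 := ne_of_gt h1
      have dd : HasDerivAt (fun s : ℝ => 1 - s^2) (-2*x) x := by
        simpa using ((hasDerivAt_pow 2 x).const_sub 1)
      have hder := ((hasDerivAt_id x).div dd h1').sub
        (artanh_hasDerivAt ⟨by linarith [hx.1], hx.2⟩)
      refine hder.congr_deriv ?_
      field_simp
      simp only [id]
      ring)
    (fun x hx => by
      have h1 : (0:ℝ) < 1 - x^2 := by nlinarith [hx.1, hx.2]
      show 0 < 2*x^2/(1-x^2)^2
      apply div_pos (by nlinarith [hx.1]) (by positivity)) hs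
  simp only [_root_.artanh_zero, zero_div] at this
  linarith

lemma sq_facts {l : ℝ} (hl : l ∈ Set.Ioo (0:ℝ) (1/4)) :
    0 < Real.sqrt (1-4*l) ∧ Real.sqrt (1-4*l) < 1 ∧ (Real.sqrt (1-4*l))^2 = 1-4*l := by
  have h1 : (0:ℝ) < 1-4*l := by linarith [hl.2]
  have h2 : (1:ℝ)-4*l < 1 := by linarith [hl.1]
  refine ⟨Real.sqrt_pos.2 h1, ?_, Real.sq_sqrt (le_of_lt h1)⟩
  have := Real.sqrt_lt_sqrt (le_of_lt h1) h2
  simpa using this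

noncomputable def Dfun (l : ℝ) : ℝ :=
  (1/(1 - (Real.sqrt (1-4*l))^2) * Real.sqrt (1-4*l) - _root_.artanh (Real.sqrt (1-4*l)) * 1) /
    (Real.sqrt (1-4*l))^2 * (-4 / (2 * Real.sqrt (1-4*l)))

lemma thetaF_hasDerivAt {l : ℝ} (hl : l ∈ Set.Ioo (0:ℝ) (1/4)) :
    HasDerivAt thetaF (Dfun l) l := by
  obtain ⟨hs0, hs1, hsq⟩ := sq_facts hl
  set s := Real.sqrt (1-4*l) with hs
  have h1 : (0:ℝ) < 1-4*l := by linarith [hl.2]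
  have hin : HasDerivAt (fun l : ℝ => 1-4*l) (-4) l := by
    simpa using ((hasDerivAt_id l).const_mul 4).const_sub 1
  have hw : HasDerivAt (fun l : ℝ => Real.sqrt (1-4*l)) (-4/(2*s)) l :=
    hin.sqrt (ne_of_gt h1)
  have hg : HasDerivAt (fun s : ℝ => -1 + _root_.artanh s / s)
      ((1/(1-s^2) * s - _root_.artanh s * 1)/s^2) s := by
    exact ((artanh_hasDerivAt ⟨by linarith, hs1⟩).div (hasDerivAt_id s)
      (ne_of_gt hs0)).const_add (-1)
  have := hg.comp l hw
  exact this

lemma Dfun_neg {l : ℝ} (hl : l ∈ Set.Ioo (0:ℝ) (1/4)) : Dfun l < 0 := by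
  obtain ⟨hs0, hs1, hsq⟩ := sq_facts hl
  set s := Real.sqrt (1-4*l)
  have hkey := key_gt ⟨hs0, hs1⟩
  have h2 : (0:ℝ) < 1 - s^2 := by nlinarith
  apply mul_neg_of_pos_of_neg
  · apply div_pos _ (by positivity)
    have h3 : _root_.artanh s < 1/(1-s^2) * s := by
      rw [div_eq_mul_inv, mul_comm] at hkey
      rw [one_div]
      linarith [hkey]
    linarith
  · apply div_neg_of_neg_of_pos (by norm_num) (by positivity)

lemma thetaF_pos {l : ℝ} (hl : l ∈ Set.Ioo (0:ℝ) (1/4)) : 0 < thetaF l := by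
  obtain ⟨hs0, hs1, _⟩ := sq_facts hl
  have := artanh_gt ⟨hs0, hs1⟩
  have : 1 < _root_.artanh (Real.sqrt (1-4*l)) / Real.sqrt (1-4*l) := by
    rw [lt_div_iff₀ hs0]; linarith
  unfold thetaF; linarith

lemma thetaF_anti : StrictAntiOn thetaF (Set.Ioo (0:ℝ) (1/4)) := by
  apply strictAntiOn_of_deriv_neg (convex_Ioo 0 (1/4))
  · exact fun x hx => (thetaF_hasDerivAt hx).continuousAt.continuousWithinAt
  · intro x hx
    rw [interior_Ioo] at hx
    rw [(thetaF_hasDerivAt hx).deriv]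
    exact Dfun_neg hx

theorem stmt8 (lam : ℝ → ℝ)
    (hmem : ∀ θ > (0:ℝ), lam θ ∈ Set.Ioo (0:ℝ) (1/4))
    (hinv : ∀ θ > (0:ℝ), thetaF (lam θ) = θ)
    (f : ℝ → ℝ)
    (hf : ∀ θ, f θ = -Real.log (lam θ) - 2*θ - θ * Real.log (1 - 4 * lam θ)) :
    ∀ θ > (0:ℝ), 1 = 4 * lam θ + Real.exp (-(deriv f θ)) := by
  -- lam is a left inverse of thetaF
  have hlaminv : ∀ l ∈ Set.Ioo (0:ℝ) (1/4), lam (thetaF l) = l := by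
    intro l hl
    have hθ := thetaF_pos hl
    exact thetaF_anti.injOn (hmem _ hθ) hl (hinv _ hθ)
  -- lam is strictly antitone on (0,∞)
  have hanti : StrictAntiOn lam (Set.Ioi (0:ℝ)) := by
    intro a ha b hb hab
    by_contra hcon
    push_neg at hcon
    have := thetaF_anti.antitoneOn (hmem a ha) (hmem b hb) hcon
    rw [hinv a ha, hinv b hb] at this
    exact absurd hab (not_lt.2 this)
  intro θ₀ hθ
  have hl₀ := hmem θ₀ hθ
  set l₀ := lam θ₀ with hl₀def
  -- continuity of lam at θ₀
  have hcont : ContinuousAt lam θ₀ := by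
    have hmono : StrictMonoOn (fun θ => -(lam θ)) (Set.Ioi (0:ℝ)) :=
      fun a ha b hb hab => neg_lt_neg (hanti ha hb hab)
    have himg : (fun θ => -(lam θ)) '' Set.Ioi (0:ℝ) ∈ nhds (-(lam θ₀)) := by
      apply Filter.mem_of_superset (Ioo_mem_nhds (by linarith [hl₀.2]) (by linarith [hl₀.1]) :
        Set.Ioo (-(1/4:ℝ)) 0 ∈ nhds (-(lam θ₀)))
      rintro y ⟨hy1, hy2⟩
      have hmy : -y ∈ Set.Ioo (0:ℝ) (1/4) := ⟨by linarith, by linarith⟩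
      refine ⟨thetaF (-y), thetaF_pos hmy, ?_⟩
      show -(lam (thetaF (-y))) = y
      rw [hlaminv _ hmy]; ring
    have h1 := hmono.continuousAt_of_image_mem_nhds (isOpen_Ioi.mem_nhds hθ) himg
    have h2 : ContinuousAt (fun θ => -(-(lam θ))) θ₀ := h1.neg
    simpa using h2
  -- derivative of lam
  have hDne : Dfun l₀ ≠ 0 := ne_of_lt (Dfun_neg hl₀)
  have hlam : HasDerivAt lam (Dfun l₀)⁻¹ θ₀ :=
    HasDerivAt.of_local_left_inverse hcont (thetaF_hasDerivAt hl₀) hDne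
      (Filter.eventually_of_mem (isOpen_Ioi.mem_nhds hθ) (fun y hy => hinv y hy))
  set L : ℝ := (Dfun l₀)⁻¹ with hLdef
  -- derivative of f
  have h4pos : (0:ℝ) < 1 - 4*l₀ := by linarith [hl₀.2]
  have hfeq : f = fun θ => -Real.log (lam θ) - 2*θ - θ * Real.log (1 - 4 * lam θ) :=
    funext hf
  have h1 : HasDerivAt (fun θ => Real.log (lam θ)) (L / l₀) θ₀ :=
    hlam.log (ne_of_gt hl₀.1)
  have hA : HasDerivAt (fun θ => 1 - 4 * lam θ) (-(4*L)) θ₀ := by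
    simpa using (hlam.const_mul 4).const_sub 1
  have h2 : HasDerivAt (fun θ => Real.log (1 - 4 * lam θ)) (-(4*L)/(1-4*l₀)) θ₀ :=
    hA.log (ne_of_gt h4pos)
  have h3 : HasDerivAt (fun θ => θ * Real.log (1 - 4 * lam θ))
      (1 * Real.log (1-4*l₀) + θ₀ * (-(4*L)/(1-4*l₀))) θ₀ :=
    (hasDerivAt_id θ₀).mul h2
  have h2θ : HasDerivAt (fun θ : ℝ => 2*θ) 2 θ₀ := by
    simpa using (hasDerivAt_id θ₀).const_mul 2
  have hF : HasDerivAt f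
      (-(L / l₀) - 2 - (1 * Real.log (1-4*l₀) + θ₀ * (-(4*L)/(1-4*l₀)))) θ₀ := by
    rw [hfeq]
    exact (h1.neg.sub h2θ).sub h3
  rw [hF.deriv]
  -- key algebraic identity
  obtain ⟨hs0, hs1, hsq⟩ := sq_facts hl₀
  set s := Real.sqrt (1-4*l₀) with hsdef
  set A := _root_.artanh s with hAdef
  have hsne : s ≠ 0 := ne_of_gt hs0
  have h1s : (0:ℝ) < 1 - s^2 := by nlinarith
  have h1sne : (1:ℝ) - s^2 ≠ 0 := ne_of_gt h1s
  have hkey := key_gt ⟨hs0, hs1⟩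
  have hXne : 1/(1-s^2) * s - A * 1 ≠ 0 := by
    have : A < 1/(1-s^2)*s := by
      rw [div_eq_mul_inv, mul_comm] at hkey
      rw [one_div]; linarith
    intro h; rw [hAdef] at h; nlinarith [this]
  have hDval : Dfun l₀ = (1/(1-s^2) * s - A * 1)/s^2 * (-4/(2*s)) := rfl
  have hθeq : θ₀ = -1 + A/s := by
    conv_lhs => rw [← hinv θ₀ hθ]
    rfl
  have hleq : l₀ = (1 - s^2)/4 := by rw [hsq]; ring
  have hid : 1/l₀ - 4*θ₀/(1-4*l₀) = -2 * Dfun l₀ := by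
    rw [hDval, hθeq, hleq]
    field_simp
    ring
  have hzero : L / l₀ + 2 - 4*θ₀*L/(1-4*l₀) = 0 := by
    have h' : L / l₀ + 2 - 4*θ₀*L/(1-4*l₀) = L * (1/l₀ - 4*θ₀/(1-4*l₀)) + 2 := by ring
    rw [h', hid, hLdef,
      show (Dfun l₀)⁻¹ * (-2 * Dfun l₀) = -2 * ((Dfun l₀)⁻¹ * Dfun l₀) from by ring,
      inv_mul_cancel₀ hDne]
    ring
  have hlog : -(-(L / l₀) - 2 - (1 * Real.log (1-4*l₀) + θ₀ * (-(4*L)/(1-4*l₀)))) =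
      Real.log (1-4*l₀) := by
    have : θ₀ * (-(4*L)/(1-4*l₀)) = -(4*θ₀*L/(1-4*l₀)) := by ring
    rw [this]; linarith [hzero]
  rw [hlog, Real.exp_log h4pos]
  ring
end

section
/- With λ(θ) the inverse of θ(λ) = -1 + Artanh(√(1-4λ))/√(1-4λ), the quantity 1 - 4(θ+1)λ(θ) is strictly positive for all θ > 0, so j(θ) = -(1/2)·log(1-4(θ+1)λ(θ)) + log(2)/2 is well-defined. -/
open Real Filter Set

lemma hasDerivAt_artanh {x : ℝ} (hx : x ∈ Set.Ioo (-1:ℝ) 1) :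
    HasDerivAt _root_.artanh (1/(1-x^2)) x := by
  obtain ⟨hx1, hx2⟩ := hx
  have h1 : (0:ℝ) < 1 + x := by linarith
  have h2 : (0:ℝ) < 1 - x := by linarith
  have d1 : HasDerivAt (fun y : ℝ => Real.log (1+y)) (1/(1+x)) x := by
    have := (Real.hasDerivAt_log (ne_of_gt h1)).comp x ((hasDerivAt_id x).const_add 1)
    simpa [one_div, Function.comp_def] using this
  have d2 : HasDerivAt (fun y : ℝ => Real.log (1-y)) (-(1/(1-x))) x := by
    have := (Real.hasDerivAt_log (ne_of_gt h2)).comp x ((hasDerivAt_id x).neg.const_add 1)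
    simpa [one_div, Function.comp_def] using this
  have dh : HasDerivAt (fun y : ℝ => (1/2) * (Real.log (1+y) - Real.log (1-y)))
      (1/(1-x^2)) x := by
    have h12 : (1:ℝ) - x^2 ≠ 0 := by nlinarith
    have := (d1.sub d2).const_mul (1/2 : ℝ)
    refine this.congr_deriv ?_
    field_simp
    ring
  have hev : _root_.artanh =ᶠ[nhds x] fun y : ℝ => (1/2) * (Real.log (1+y) - Real.log (1-y)) := by
    filter_upwards [isOpen_Ioo.mem_nhds (show x ∈ Set.Ioo (-1:ℝ) 1 from ⟨hx1, hx2⟩)] with y hy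
    have hy1 : (0:ℝ) < 1 + y := by linarith [hy.1]
    have hy2 : (0:ℝ) < 1 - y := by linarith [hy.2]
    unfold _root_.artanh
    rw [Real.log_div (ne_of_gt hy1) (ne_of_gt hy2)]
  exact dh.congr_of_eventuallyEq hev

lemma artanh_pos {x : ℝ} (hx : x ∈ Set.Ioo (0:ℝ) 1) : 0 < _root_.artanh x := by
  obtain ⟨hx1, hx2⟩ := hx
  have : (1:ℝ) < (1+x)/(1-x) := by
    rw [lt_div_iff₀ (by linarith)]
    linarith
  have := Real.log_pos this
  unfold _root_.artanh
  linarith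

lemma key_ineq {s : ℝ} (hs : s ∈ Set.Ioo (0:ℝ) 1) : (1 - s^2) * _root_.artanh s < s := by
  set g : ℝ → ℝ := fun x => x - (1-x^2) * _root_.artanh x with hg
  have hderiv : ∀ x ∈ Set.Ioo (-1:ℝ) 1, HasDerivAt g (2*x*_root_.artanh x) x := by
    intro x hx
    have h1x : (1:ℝ) - x^2 ≠ 0 := by
      have : x^2 < 1 := by nlinarith [hx.1, hx.2]
      nlinarith
    have d := ((hasDerivAt_id x).pow 2).const_sub 1
    have dprod := d.mul (hasDerivAt_artanh hx)
    have := (hasDerivAt_id x).sub dprod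
    refine this.congr_deriv ?_
    field_simp
    simp only [id, Pi.pow_apply]
    ring
  have hsub : Set.Ico (0:ℝ) 1 ⊆ Set.Ioo (-1:ℝ) 1 := fun x hx => ⟨by linarith [hx.1], hx.2⟩
  have hcont : ContinuousOn g (Set.Ico (0:ℝ) 1) := fun x hx =>
    (hderiv x (hsub hx)).continuousAt.continuousWithinAt
  have hmono : StrictMonoOn g (Set.Ico (0:ℝ) 1) := by
    apply strictMonoOn_of_deriv_pos (convex_Ico 0 1) hcont
    intro x hx
    rw [interior_Ico] at hx
    rw [(hderiv x ⟨by linarith [hx.1], hx.2⟩).deriv]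
    have h1 := _root_.artanh_pos hx
    have h2 := hx.1
    positivity
  have h0 : g 0 = 0 := by simp [hg, _root_.artanh_zero]
  have hlt := hmono (Set.left_mem_Ico.2 one_pos) ⟨hs.1.le, hs.2⟩ hs.1
  rw [h0] at hlt
  simp only [hg] at hlt
  linarith

theorem stmt10 (lam : ℝ → ℝ)
    (hmem : ∀ θ > (0:ℝ), lam θ ∈ Set.Ioo (0:ℝ) (1/4))
    (hinv : ∀ θ > (0:ℝ), thetaF (lam θ) = θ) :
    ∀ θ > (0:ℝ), 0 < 1 - 4*(θ+1)*lam θ := by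
  intro θ hθ
  obtain ⟨hl0, hl4⟩ := hmem θ hθ
  set l := lam θ with hl
  have h4l : (0:ℝ) < 1 - 4*l := by linarith
  set s := Real.sqrt (1-4*l) with hsdef
  have hs0 : 0 < s := Real.sqrt_pos.2 h4l
  have hsq : s^2 = 1 - 4*l := Real.sq_sqrt h4l.le
  have hs1 : s < 1 := by nlinarith
  have hθeq := hinv θ hθ
  unfold thetaF at hθeq
  rw [← hsdef] at hθeq
  have hθ1 : θ + 1 = _root_.artanh s / s := by linarith
  have hkey := key_ineq ⟨hs0, hs1⟩
  have hmain : 4*(θ+1)*l < 1 := by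
    rw [hθ1]
    have : 4 * (_root_.artanh s / s) * l = (4*l*_root_.artanh s)/s := by ring
    rw [this, div_lt_one hs0]
    nlinarith
  linarith
end

section
/- With λ(θ), f(θ) = -log λ - 2θ - θ log(1-4λ), and j(θ) = -(1/2)log(1-4(θ+1)λ) + (1/2)log 2 as above, the functions satisfy (4θλ - exp(-f'))·j' + (f''/2)·(4θ²λ + exp(-f')) + 4λ(1/2 - θ) = 0 for all θ > 0. -/
open Real Filter Set

lemma artanh_hasDerivAt_s11 {x : ℝ} (h1 : -1 < x) (h2 : x < 1) :
    HasDerivAt _root_.artanh (1/(1-x^2)) x := by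
  have hx1 : (0:ℝ) < 1 + x := by linarith
  have hx2 : (0:ℝ) < 1 - x := by linarith
  have ha : HasDerivAt (fun y : ℝ => 1+y) 1 x := by
    simpa using (hasDerivAt_id x).const_add (1:ℝ)
  have hb : HasDerivAt (fun y : ℝ => 1-y) (-1) x := by
    simpa using (hasDerivAt_id x).const_sub (1:ℝ)
  have hu : HasDerivAt (fun y : ℝ => (1+y)/(1-y))
      ((1*(1-x) - (1+x)*(-1))/(1-x)^2) x := ha.div hb (ne_of_gt hx2)
  have hl := (hu.log (ne_of_gt (div_pos hx1 hx2))).const_mul (1/2 : ℝ)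
  have : _root_.artanh = fun y : ℝ => (1/2) * Real.log ((1+y)/(1-y)) := rfl
  rw [this]
  have h3 : (1-x^2) ≠ 0 := by nlinarith
  have h4 : (1-x) ≠ 0 := ne_of_gt hx2
  have h5 : (1+x) ≠ 0 := ne_of_gt hx1
  refine hl.congr_deriv ?_
  field_simp
  ring

lemma key_ineq_s11 {s : ℝ} (h0 : 0 < s) (h1 : s < 1) : _root_.artanh s < s / (1 - s^2) := by
  set g : ℝ → ℝ := fun x => x/(1-x^2) - _root_.artanh x with hg
  have hderiv : ∀ x ∈ Set.Ioo (-1:ℝ) 1, HasDerivAt g (2*x^2/(1-x^2)^2) x := by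
    intro x hx
    obtain ⟨hxa, hxb⟩ := hx
    have hne : (1 - x^2) ≠ 0 := by nlinarith
    have hq : HasDerivAt (fun y : ℝ => y/(1-y^2))
        ((1*(1-x^2) - x*(-(2*x)))/(1-x^2)^2) x := by
      have hd : HasDerivAt (fun y : ℝ => 1 - y^2) (-(2*x)) x := by
        simpa using ((hasDerivAt_pow 2 x).const_sub (1:ℝ))
      exact (hasDerivAt_id x).div hd hne
    have := hq.sub (artanh_hasDerivAt_s11 hxa hxb)
    refine this.congr_deriv ?_
    field_simp
    ring
  have hmono : StrictMonoOn g (Set.Ico (0:ℝ) 1) := by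
    apply strictMonoOn_of_deriv_pos (convex_Ico 0 1)
    · intro x hx
      exact (hderiv x ⟨by linarith [hx.1], hx.2⟩).differentiableAt.continuousAt.continuousWithinAt
    · intro x hx
      rw [interior_Ico] at hx
      rw [(hderiv x ⟨by linarith [hx.1], hx.2⟩).deriv]
      have ha : 0 < 2*x^2 := by nlinarith [hx.1]
      have hb : 0 < (1-x^2)^2 := pow_pos (by nlinarith [hx.1, hx.2]) 2
      exact div_pos ha hb
  have h00 : g 0 = 0 := by
    simp [hg, _root_.artanh]
  have := hmono (Set.mem_Ico.mpr ⟨le_refl 0, one_pos⟩) (Set.mem_Ico.mpr ⟨le_of_lt h0, h1⟩) h0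
  rw [h00] at this
  simp only [hg] at this
  linarith

lemma sqrt_facts {l : ℝ} (h0 : 0 < l) (h1 : l < 1/4) :
    0 < Real.sqrt (1-4*l) ∧ Real.sqrt (1-4*l) < 1 ∧ (Real.sqrt (1-4*l))^2 = 1-4*l := by
  have hpos : 0 < 1-4*l := by linarith
  refine ⟨Real.sqrt_pos.mpr hpos, ?_, Real.sq_sqrt (le_of_lt hpos)⟩
  exact (Real.sqrt_lt' one_pos).mpr (by nlinarith)

lemma thetaF_hasDerivAt_s11 {l : ℝ} (h0 : 0 < l) (h1 : l < 1/4) :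
    HasDerivAt thetaF
      (2*(_root_.artanh (Real.sqrt (1-4*l)) - Real.sqrt (1-4*l)/(1-(Real.sqrt (1-4*l))^2))
        / (Real.sqrt (1-4*l))^3) l := by
  obtain ⟨hs0, hs1, hsq⟩ := sqrt_facts h0 h1
  set s := Real.sqrt (1-4*l) with hs
  have hpos : 0 < 1-4*l := by linarith
  have hinner : HasDerivAt (fun y : ℝ => 1-4*y) (-4) l := by
    simpa using ((hasDerivAt_id l).const_mul (4:ℝ)).const_sub (1:ℝ)
  have hS : HasDerivAt (fun y : ℝ => Real.sqrt (1-4*y)) (-2/s) l := by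
    have := (Real.hasDerivAt_sqrt (ne_of_gt hpos)).comp l hinner
    refine this.congr_deriv ?_
    field_simp [hs]
    ring
  have hA : HasDerivAt (fun y : ℝ => _root_.artanh (Real.sqrt (1-4*y)))
      (1/(1-s^2) * (-2/s)) l :=
    HasDerivAt.comp (h₂ := _root_.artanh) l (artanh_hasDerivAt_s11 (by linarith) hs1) hS
  have hdiv := hA.div hS (ne_of_gt hs0)
  have hfull := hdiv.const_add (-1 : ℝ)
  have hth : thetaF = fun y : ℝ => -1 + _root_.artanh (Real.sqrt (1-4*y)) / Real.sqrt (1-4*y) := rfl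
  rw [hth]
  rw [← hs] at hfull
  have hne1 : (1:ℝ) - s^2 ≠ 0 := by rw [hsq]; linarith
  refine hfull.congr_deriv ?_
  field_simp
  ring

section
variable (lam : ℝ → ℝ)
    (hmem : ∀ θ > (0:ℝ), lam θ ∈ Set.Ioo (0:ℝ) (1/4))
    (hinv : ∀ θ > (0:ℝ), thetaF (lam θ) = θ)

include hmem hinv

lemma lam_cont {θ : ℝ} (hθ : 0 < θ) : ContinuousAt lam θ := by
  obtain ⟨hl0, hl1⟩ := hmem θ hθ
  set l0 := lam θ with hl0def
  rw [Metric.continuousAt_iff]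
  intro ε hε
  set ε' := min ε (min (l0/2) ((1/4 - l0)/2)) with hε'
  have hε'0 : 0 < ε' := by
    apply lt_min hε
    apply lt_min <;> linarith
  have hε'a : ε' ≤ ε := min_le_left _ _
  have hε'b : ε' ≤ l0/2 := le_trans (min_le_right _ _) (min_le_left _ _)
  have hε'c : ε' ≤ (1/4 - l0)/2 := le_trans (min_le_right _ _) (min_le_right _ _)
  have hmem1 : l0 + ε' ∈ Set.Ioo (0:ℝ) (1/4) := ⟨by linarith, by linarith⟩
  have hmem2 : l0 - ε' ∈ Set.Ioo (0:ℝ) (1/4) := ⟨by linarith, by linarith⟩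
  have hmem0 : l0 ∈ Set.Ioo (0:ℝ) (1/4) := ⟨hl0, hl1⟩
  set θm := thetaF (l0 + ε') with hθm
  set θp := thetaF (l0 - ε') with hθp
  have h1 : θm < θ := by
    have := thetaF_anti hmem0 hmem1 (by linarith)
    rwa [hinv θ hθ] at this
  have h2 : θ < θp := by
    have := thetaF_anti hmem2 hmem0 (by linarith)
    rwa [hinv θ hθ] at this
  refine ⟨min (θ - θm) (min (θp - θ) (θ/2)),
    lt_min (by linarith) (lt_min (by linarith) (by linarith)), ?_⟩
  intro x hx
  rw [Real.dist_eq] at hx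
  obtain ⟨ha, hb⟩ := abs_lt.mp hx
  have hd1 : min (θ - θm) (min (θp - θ) (θ/2)) ≤ θ - θm := min_le_left _ _
  have hd2 : min (θ - θm) (min (θp - θ) (θ/2)) ≤ θp - θ :=
    le_trans (min_le_right _ _) (min_le_left _ _)
  have hd3 : min (θ - θm) (min (θp - θ) (θ/2)) ≤ θ/2 :=
    le_trans (min_le_right _ _) (min_le_right _ _)
  have hx1 : θm < x := by linarith
  have hx2 : x < θp := by linarith
  have hx0 : 0 < x := by linarith
  have hxm := hmem x hx0
  have hub : lam x < l0 + ε' := by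
    by_contra h
    push_neg at h
    have := (thetaF_anti.le_iff_ge hxm hmem1).mpr h
    rw [hinv x hx0] at this
    linarith
  have hlb : l0 - ε' < lam x := by
    by_contra h
    push_neg at h
    have := (thetaF_anti.le_iff_ge hmem2 hxm).mpr h
    rw [hinv x hx0] at this
    linarith
  rw [Real.dist_eq, abs_lt]
  constructor <;> linarith

lemma lam_hasDerivAt {θ : ℝ} (hθ : 0 < θ) :
    HasDerivAt lam (-2*lam θ*(1-4*lam θ)/(1-4*(θ+1)*lam θ)) θ ∧
      0 < 1-4*(θ+1)*lam θ := by
  obtain ⟨hl0, hl1⟩ := hmem θ hθ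
  obtain ⟨hs0, hs1, hsq⟩ := sqrt_facts hl0 hl1
  set l := lam θ with hldef
  set s := Real.sqrt (1-4*l) with hsdef
  have hart : _root_.artanh s = (θ+1)*s := by
    have := hinv θ hθ
    rw [show thetaF l = -1 + _root_.artanh s / s from rfl] at this
    field_simp at this
    linarith
  have hkey := key_ineq_s11 hs0 hs1
  have h4l : (1:ℝ) - s^2 = 4*l := by rw [hsq]; ring
  have hD : 0 < 1-4*(θ+1)*l := by
    rw [hart, h4l] at hkey
    have hl4 : 0 < 4*l := by linarith
    rw [lt_div_iff₀ hl4] at hkey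
    nlinarith [hs0]
  refine ⟨?_, hD⟩
  have hE : HasDerivAt thetaF (2*(_root_.artanh s - s/(1-s^2)) / s^3) l :=
    thetaF_hasDerivAt_s11 hl0 hl1
  have hs0' : s ≠ 0 := ne_of_gt hs0
  have hlne : l ≠ 0 := ne_of_gt hl0
  have h14 : (1:ℝ)-4*l ≠ 0 := by linarith
  have hDne : (1:ℝ)-4*(θ+1)*l ≠ 0 := ne_of_gt hD
  have hEval : 2*(_root_.artanh s - s/(1-s^2)) / s^3 = -(1-4*(θ+1)*l)/(2*l*(1-4*l)) := by
    rw [hart, h4l]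
    rw [show s^3 = s*s^2 by ring, hsq]
    field_simp
    ring
  rw [hEval] at hE
  have hEne : -(1-4*(θ+1)*l)/(2*l*(1-4*l)) ≠ 0 := by
    apply div_ne_zero
    · linarith
    · nlinarith
  have hev : ∀ᶠ x in nhds θ, thetaF (lam x) = x := by
    filter_upwards [eventually_gt_nhds hθ] with x hx
    exact hinv x hx
  have := HasDerivAt.of_local_left_inverse (lam_cont lam hmem hinv hθ) hE hEne hev
  refine this.congr_deriv ?_
  rw [inv_div, div_neg]
  ring

lemma f_hasDerivAt (f : ℝ → ℝ)
    (hf : ∀ θ, f θ = -Real.log (lam θ) - 2*θ - θ * Real.log (1 - 4 * lam θ))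
    {θ : ℝ} (hθ : 0 < θ) :
    HasDerivAt f (-Real.log (1 - 4 * lam θ)) θ := by
  obtain ⟨hl0, hl1⟩ := hmem θ hθ
  obtain ⟨hL, hD⟩ := lam_hasDerivAt lam hmem hinv (θ := θ) hθ
  have h14 : (0:ℝ) < 1 - 4*lam θ := by linarith
  have hfe : f = fun t => -Real.log (lam t) - 2*t - t * Real.log (1 - 4 * lam t) :=
    funext hf
  have h1 : HasDerivAt (fun t => Real.log (lam t))
      ((-2*lam θ*(1-4*lam θ)/(1-4*(θ+1)*lam θ))/lam θ) θ := hL.log (ne_of_gt hl0)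
  have h2 : HasDerivAt (fun t => 1 - 4*lam t)
      (-(4*(-2*lam θ*(1-4*lam θ)/(1-4*(θ+1)*lam θ)))) θ := (hL.const_mul (4:ℝ)).const_sub 1
  have h3 : HasDerivAt (fun t => Real.log (1 - 4*lam t))
      ((-(4*(-2*lam θ*(1-4*lam θ)/(1-4*(θ+1)*lam θ))))/(1-4*lam θ)) θ :=
    h2.log (ne_of_gt h14)
  have h4 : HasDerivAt (fun t : ℝ => t * Real.log (1 - 4*lam t))
      (1 * Real.log (1-4*lam θ)
        + θ * ((-(4*(-2*lam θ*(1-4*lam θ)/(1-4*(θ+1)*lam θ))))/(1-4*lam θ))) θ :=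
    (hasDerivAt_id θ).mul h3
  have h5 : HasDerivAt f
      (-((-2*lam θ*(1-4*lam θ)/(1-4*(θ+1)*lam θ))/lam θ) - 2*1
        - (1 * Real.log (1-4*lam θ)
          + θ * ((-(4*(-2*lam θ*(1-4*lam θ)/(1-4*(θ+1)*lam θ))))/(1-4*lam θ)))) θ := by
    rw [hfe]
    exact (h1.neg.sub ((hasDerivAt_id θ).const_mul 2)).sub h4
  refine h5.congr_deriv ?_
  have hDne : (1:ℝ)-4*(θ+1)*lam θ ≠ 0 := ne_of_gt hD
  have h14ne : (1:ℝ) - 4*lam θ ≠ 0 := ne_of_gt h14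
  have hlne : lam θ ≠ 0 := ne_of_gt hl0
  have hz : -((-2*lam θ*(1-4*lam θ)/(1-4*(θ+1)*lam θ))/lam θ)
      - θ * ((-(4*(-2*lam θ*(1-4*lam θ)/(1-4*(θ+1)*lam θ))))/(1-4*lam θ)) = 2 := by
    field_simp
    rw [div_eq_one_iff_eq (mul_ne_zero (by intro h; apply h14ne; linarith) (by intro h; apply hDne; linarith))]
    ring
  linarith [hz]

lemma j_hasDerivAt (j : ℝ → ℝ)
    (hj : ∀ θ, j θ = -(1/2) * Real.log (1 - 4*(θ+1)*lam θ) + (1/2) * Real.log 2)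
    {θ : ℝ} (hθ : 0 < θ) :
    HasDerivAt j (2*(lam θ+(θ+1)*(-2*lam θ*(1-4*lam θ)/(1-4*(θ+1)*lam θ)))
      /(1-4*(θ+1)*lam θ)) θ := by
  obtain ⟨hl0, hl1⟩ := hmem θ hθ
  obtain ⟨hL, hD⟩ := lam_hasDerivAt lam hmem hinv (θ := θ) hθ
  have hje : j = fun t => -(1/2) * Real.log (1 - 4*(t+1)*lam t) + (1/2) * Real.log 2 :=
    funext hj
  have hu : HasDerivAt (fun t : ℝ => 1 - 4*(t+1)*lam t)
      (-(4*(1*lam θ + (θ+1)*(-2*lam θ*(1-4*lam θ)/(1-4*(θ+1)*lam θ))))) θ := by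
    have h := (((hasDerivAt_id θ).add_const 1).mul hL).const_mul (4:ℝ) |>.const_sub 1
    simp only [id_eq] at h
    refine h.congr_of_eventuallyEq (Filter.Eventually.of_forall fun x => ?_)
    simp only [Pi.mul_apply]
    ring
  have hlog : HasDerivAt (fun t : ℝ => Real.log (1 - 4*(t+1)*lam t))
      ((-(4*(1*lam θ + (θ+1)*(-2*lam θ*(1-4*lam θ)/(1-4*(θ+1)*lam θ)))))
        /(1-4*(θ+1)*lam θ)) θ := hu.log (ne_of_gt hD)
  have h5 : HasDerivAt j (-(1/2) * ((-(4*(1*lam θ + (θ+1)*(-2*lam θ*(1-4*lam θ)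
      /(1-4*(θ+1)*lam θ)))))/(1-4*(θ+1)*lam θ))) θ := by
    rw [hje]
    exact (hlog.const_mul (-(1/2):ℝ)).add_const _
  refine h5.congr_deriv ?_
  have hDne : (1:ℝ)-4*(θ+1)*lam θ ≠ 0 := ne_of_gt hD
  field_simp
  ring

end

theorem stmt11 (lam : ℝ → ℝ)
    (hmem : ∀ θ > (0:ℝ), lam θ ∈ Set.Ioo (0:ℝ) (1/4))
    (hinv : ∀ θ > (0:ℝ), thetaF (lam θ) = θ)
    (f j : ℝ → ℝ)
    (hf : ∀ θ, f θ = -Real.log (lam θ) - 2*θ - θ * Real.log (1 - 4 * lam θ))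
    (hj : ∀ θ, j θ = -(1/2) * Real.log (1 - 4*(θ+1)*lam θ) + (1/2) * Real.log 2) :
    ∀ θ > (0:ℝ),
      (4*θ*lam θ - Real.exp (-(deriv f θ))) * deriv j θ
        + (deriv (deriv f) θ / 2) * (4*θ^2*lam θ + Real.exp (-(deriv f θ)))
        + 4 * lam θ * (1/2 - θ) = 0 := by
  intro θ hθ
  obtain ⟨hl0, hl1⟩ := hmem θ hθ
  obtain ⟨hL, hD⟩ := lam_hasDerivAt lam hmem hinv (θ := θ) hθ
  have h14 : (0:ℝ) < 1 - 4*lam θ := by linarith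
  -- first derivative of f
  have hfd : ∀ t > (0:ℝ), deriv f t = -Real.log (1 - 4 * lam t) := by
    intro t ht
    exact (f_hasDerivAt lam hmem hinv f hf ht).deriv
  have hfd1 : deriv f θ = -Real.log (1 - 4 * lam θ) := hfd θ hθ
  have hexp : Real.exp (-(deriv f θ)) = 1 - 4*lam θ := by
    rw [hfd1, neg_neg, Real.exp_log h14]
  -- second derivative of f
  have hff : deriv f =ᶠ[nhds θ] fun t => -Real.log (1 - 4 * lam t) := by
    filter_upwards [eventually_gt_nhds hθ] with x hx
    exact hfd x hx
  have h2 : HasDerivAt (fun t => 1 - 4*lam t)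
      (-(4*(-2*lam θ*(1-4*lam θ)/(1-4*(θ+1)*lam θ)))) θ := (hL.const_mul (4:ℝ)).const_sub 1
  have h3 : HasDerivAt (fun t : ℝ => -Real.log (1 - 4*lam t))
      (-((-(4*(-2*lam θ*(1-4*lam θ)/(1-4*(θ+1)*lam θ))))/(1-4*lam θ))) θ :=
    (h2.log (ne_of_gt h14)).neg
  have hfdd : deriv (deriv f) θ
      = -((-(4*(-2*lam θ*(1-4*lam θ)/(1-4*(θ+1)*lam θ))))/(1-4*lam θ)) := by
    rw [hff.deriv_eq]
    exact h3.deriv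
  have hjd : deriv j θ = 2*(lam θ+(θ+1)*(-2*lam θ*(1-4*lam θ)/(1-4*(θ+1)*lam θ)))
      /(1-4*(θ+1)*lam θ) := (j_hasDerivAt lam hmem hinv j hj hθ).deriv
  rw [hexp, hfdd, hjd]
  have hDne : (1:ℝ)-4*(θ+1)*lam θ ≠ 0 := ne_of_gt hD
  have h14ne : (1:ℝ) - 4*lam θ ≠ 0 := ne_of_gt h14
  have hDne' : (1:ℝ) - 4*lam θ*(θ+1) ≠ 0 := by intro h; apply hDne; linarith
  field_simp
  ring
end
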